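/- Under the above hypotheses, the image of the map φ: F_q^* × H → F_{q^r}^*, φ(y,z) = yz, is exactly the set of nonzero squares of F_{q^r}, i.e., the subgroup of index 2 in F_{q^r}^*; moreover each element of the image has exactly 2(q-1)/N preimages. -/
import Mathlib

open Subgroup


/-- The image of `φ : F_q^* × H → F_{q^r}^*`, `(y,z) ↦ yz`, is exactly the set of
nonzero squares of `F_{q^r}`, and every element of the image has exactly
`2(q-1)/N` preimages. -/
theorem image_of_mul_hom (q r N : ℕ) (hq : IsPrimePow q) (hodd : Odd q)
    (hr : 2 ≤ r) (hre : Even r) (hN : 0 < N) (hNdvd : N ∣ q ^ r - 1)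
    (hgcd : Nat.gcd ((q ^ r - 1) / (q - 1)) N = 2)
    (F : Type*) [Field F] [Fintype F] (hF : Fintype.card F = q ^ r)
    (K : Subfield F) (hK : Nat.card K = q)
    (H : Subgroup Fˣ) (hH : Nat.card H = (q ^ r - 1) / N) :
    ∀ x : Fˣ,
      ((∃ (y : Kˣ) (z : H), ((y : K) : F) * ((z : Fˣ) : F) = (x : F)) ↔ IsSquare x) ∧
      (IsSquare x →
        Nat.card {p : Kˣ × H // ((p.1 : K) : F) * ((p.2 : Fˣ) : F) = (x : F)} =
          2 * (q - 1) / N) := by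
  -- Basic arithmetic setup
  have hq2 : 2 ≤ q := hq.two_le
  set M := q ^ r - 1 with hMdef
  have hqr_odd : Odd (q ^ r) := hodd.pow
  have hqr4 : 4 ≤ q ^ r := by
    calc (4 : ℕ) = 2 ^ 2 := by norm_num
    _ ≤ q ^ 2 := Nat.pow_le_pow_left hq2 2
    _ ≤ q ^ r := Nat.pow_le_pow_right (by omega) hr
  have hMpos : 0 < M := by omega
  have hM2 : 2 ∣ M := by obtain ⟨k, hk⟩ := hqr_odd; omega
  have hq1M : (q - 1) ∣ M := by simpa using Nat.sub_dvd_pow_sub_pow q 1 r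
  set s := M / (q - 1) with hsdef
  have hs : (q - 1) * s = M := Nat.mul_div_cancel' hq1M
  have h2s : 2 ∣ s := hgcd ▸ Nat.gcd_dvd_left s N
  have h2N : 2 ∣ N := hgcd ▸ Nat.gcd_dvd_right s N
  have hN2q : N ∣ 2 * (q - 1) := by
    have h1 : N ∣ (q - 1) * s := hs ▸ hNdvd
    have h2 : N ∣ (q - 1) * N := Dvd.intro_left _ rfl
    have h3 := Nat.dvd_gcd h1 h2
    rwa [Nat.gcd_mul_left, hgcd, mul_comm] at h3
  have hMN : N * (M / N) = M := Nat.mul_div_cancel' hNdvd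
  -- Cards
  have hcardFu : Nat.card Fˣ = M := by
    rw [Nat.card_units, Nat.card_eq_fintype_card, hF]
  have hcharne2 : ringChar F ≠ 2 := by
    intro h
    have h2 := (FiniteField.even_card_iff_char_two (F := F)).mp h
    rw [hF] at h2
    obtain ⟨k, hk⟩ := hqr_odd; omega
  -- The embedding of K-units
  let f : Kˣ →* Fˣ := Units.map K.subtype.toMonoidHom
  have hf_inj : Function.Injective f := Units.map_injective K.subtype.injective
  have hfval : ∀ y : Kˣ, (f y : F) = ((y : K) : F) := fun y => rfl
  set KU := f.range with hKUdef
  have hcardKx : Nat.card Kˣ = q - 1 := by rw [Nat.card_units, hK]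
  have hcardKU : Nat.card KU = q - 1 := by
    rw [← hcardKx]
    exact Nat.card_congr (MonoidHom.ofInjective hf_inj).toEquiv.symm
  -- The map ψ
  let ψ : Kˣ × H →* Fˣ :=
    (f.comp (MonoidHom.fst Kˣ H)) * ((H.subtype).comp (MonoidHom.snd Kˣ H))
  have hψ : ∀ p : Kˣ × H, ψ p = f p.1 * (p.2 : Fˣ) := fun p => rfl
  have hrange : ψ.range = KU ⊔ H := by
    apply le_antisymm
    · rintro u ⟨⟨y, z⟩, rfl⟩
      exact mul_mem (mem_sup_left ⟨y, rfl⟩) (mem_sup_right z.2)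
    · rw [sup_le_iff]
      constructor
      · rintro u ⟨y, rfl⟩
        exact ⟨(y, 1), by simp [hψ]⟩
      · intro z hz
        exact ⟨(1, ⟨z, hz⟩), by simp [hψ]⟩
  -- Every element of KU ⊔ H is killed by M/2
  have hq1M2 : (q - 1) ∣ M / 2 := by
    obtain ⟨s2, hs2⟩ := h2s
    have hMeq : M = 2 * ((q - 1) * s2) := by rw [← hs, hs2]; ring
    exact ⟨s2, by rw [hMeq, Nat.mul_div_cancel_left _ (by norm_num)]⟩
  have hMNM2 : (M / N) ∣ M / 2 := by
    obtain ⟨n2, hn2⟩ := h2N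
    obtain ⟨mN, hmN⟩ := hNdvd
    have h1 : M / N = mN := by rw [hmN, Nat.mul_div_cancel_left _ hN]
    have h2 : M = 2 * (mN * n2) := by rw [hmN, hn2]; ring
    have h3 : M / 2 = mN * n2 := by rw [h2, Nat.mul_div_cancel_left _ (by norm_num)]
    exact ⟨n2, by rw [h1, h3]⟩
  have hsup_pow : ∀ u ∈ KU ⊔ H, u ^ (M / 2) = 1 := by
    intro u hu
    rw [mem_sup] at hu
    obtain ⟨a, ha, b, hb, rfl⟩ := hu
    have ha1 : a ^ (M / 2) = 1 := by
      obtain ⟨y, rfl⟩ := ha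
      obtain ⟨t, ht⟩ := hq1M2
      have hy : y ^ (q - 1) = 1 := by rw [← hcardKx]; exact pow_card_eq_one'
      rw [ht, pow_mul, ← map_pow, hy, map_one, one_pow]
    have hb1 : b ^ (M / 2) = 1 := by
      obtain ⟨t, ht⟩ := hMNM2
      have hbH : (⟨b, hb⟩ : H) ^ (M / N) = 1 := by rw [← hH]; exact pow_card_eq_one'
      have hbH' : b ^ (M / N) = 1 := by
        have := congrArg (Subtype.val) hbH
        simpa using this
      rw [ht, pow_mul, hbH', one_pow]
    rw [mul_pow, ha1, hb1, one_mul]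
  -- Square criterion
  have hcrit : ∀ u : Fˣ, IsSquare u ↔ u ^ (M / 2) = 1 := by
    intro u
    rw [FiniteField.unit_isSquare_iff hcharne2 u]
    have hcd : Fintype.card F / 2 = M / 2 := by
      rw [hF]; obtain ⟨k, hk⟩ := hqr_odd; omega
    rw [hcd]
  -- The squares subgroup
  let sq : Fˣ →* Fˣ := powMonoidHom 2
  have hsqmem : ∀ u : Fˣ, u ∈ sq.range ↔ IsSquare u := by
    intro u
    constructor
    · rintro ⟨v, rfl⟩; exact ⟨v, by simp [sq, powMonoidHom_apply, pow_two]⟩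
    · rintro ⟨v, rfl⟩; exact ⟨v, by simp [sq, powMonoidHom_apply, pow_two]⟩
  have hsup_le : KU ⊔ H ≤ sq.range := by
    intro u hu
    rw [hsqmem u, hcrit u]
    exact hsup_pow u hu
  -- card of ker of squaring is ≥ 2
  have hneg1 : (-1 : Fˣ) ≠ 1 := by
    intro h
    have := congrArg (Units.val) h
    simp only [Units.val_neg, Units.val_one] at this
    exact Ring.neg_one_ne_one_of_char_ne_two hcharne2 this
  have hker2 : 2 ≤ Nat.card sq.ker := by
    have : Nontrivial sq.ker := by
      refine ⟨⟨1, one_mem _⟩, ⟨-1, ?_⟩, ?_⟩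
      · rw [MonoidHom.mem_ker]; simp [sq, powMonoidHom_apply]
      · intro h
        exact hneg1 (congrArg Subtype.val h).symm
    exact Finite.one_lt_card_iff_nontrivial.mpr this
  -- card of sq.range
  -- first isomorphism counting for sq and ψ
  have hfsq : Nat.card Fˣ = Nat.card sq.range * Nat.card sq.ker := by
    rw [Subgroup.card_eq_card_quotient_mul_card_subgroup sq.ker,
      Nat.card_congr (QuotientGroup.quotientKerEquivRange sq).toEquiv]
  have hfψ : Nat.card (Kˣ × H) = Nat.card ψ.range * Nat.card ψ.ker := by
    rw [Subgroup.card_eq_card_quotient_mul_card_subgroup ψ.ker,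
      Nat.card_congr (QuotientGroup.quotientKerEquivRange ψ).toEquiv]
  have hsqle : Nat.card sq.range ≤ M / 2 := by
    have h1 : Nat.card sq.range * 2 ≤ Nat.card sq.range * Nat.card sq.ker :=
      Nat.mul_le_mul_left _ hker2
    rw [← hfsq, hcardFu] at h1
    omega
  -- card of the sup
  set c := Nat.card (KU ⊔ H : Subgroup Fˣ) with hc
  have hcpos : 0 < c := Nat.card_pos
  have hcdvdM : c ∣ M := hcardFu ▸ Subgroup.card_subgroup_dvd_card _
  have hq1c : (q - 1) ∣ c := hcardKU ▸ card_dvd_of_le le_sup_left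
  have hMNc : (M / N) ∣ c := hH ▸ card_dvd_of_le le_sup_right
  have hM2c : (M / 2) ∣ c := by
    set e := M / c with he
    have hce : c * e = M := Nat.mul_div_cancel' hcdvdM
    have heM : e ∣ M := Nat.div_dvd_of_dvd hcdvdM
    have hMe : M / e = c := by rw [he, Nat.div_div_self hcdvdM (by omega)]
    have hes : e ∣ s := by
      have h1 : (q - 1) ∣ M / e := hMe ▸ hq1c
      rw [Nat.dvd_div_iff_mul_dvd heM] at h1
      rw [hsdef, Nat.dvd_div_iff_mul_dvd hq1M]
      exact (mul_comm e (q-1)) ▸ h1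
    have heN : e ∣ N := by
      have h1 : (M / N) ∣ M / e := hMe ▸ hMNc
      rw [Nat.dvd_div_iff_mul_dvd heM] at h1
      have h2 : e ∣ M / (M / N) := by
        rw [Nat.dvd_div_iff_mul_dvd (Nat.div_dvd_of_dvd hNdvd)]
        rwa [mul_comm] at h1
      rwa [Nat.div_div_self hNdvd (by omega)] at h2
    have he2 : e ∣ 2 := hgcd ▸ Nat.dvd_gcd hes heN
    rcases (Nat.dvd_prime Nat.prime_two).mp he2 with h1 | h1
    · rw [h1, mul_one] at hce
      rw [hce]
      exact Nat.div_dvd_of_dvd hM2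
    · rw [← hMe, h1]
  have hcM2 : c = M / 2 := by
    have hcle : c ≤ Nat.card sq.range :=
      Nat.le_of_dvd Nat.card_pos (card_dvd_of_le hsup_le)
    have := Nat.le_of_dvd hcpos hM2c
    omega
  -- sup = squares
  have hsup_eq : (KU ⊔ H : Subgroup Fˣ) = sq.range := by
    apply SetLike.coe_injective
    apply Set.eq_of_subset_of_ncard_le hsup_le
    rw [← Nat.card_coe_set_eq, ← Nat.card_coe_set_eq]
    show Nat.card sq.range ≤ Nat.card (KU ⊔ H : Subgroup Fˣ)
    omega
  intro x
  -- main membership iff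
  have hmem : (∃ (y : Kˣ) (z : H), ((y : K) : F) * ((z : Fˣ) : F) = (x : F)) ↔ IsSquare x := by
    constructor
    · rintro ⟨y, z, hyz⟩
      have hx : x = f y * (z : Fˣ) := by
        apply Units.ext
        rw [← hyz, Units.val_mul, hfval]
      rw [← hsqmem]
      rw [← hsup_eq, hx]
      exact mul_mem (mem_sup_left ⟨y, rfl⟩) (mem_sup_right z.2)
    · intro hx
      have : x ∈ KU ⊔ H := by rw [hsup_eq, hsqmem]; exact hx
      rw [mem_sup] at this
      obtain ⟨a, ha, b, hb, rfl⟩ := this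
      obtain ⟨y, rfl⟩ := ha
      exact ⟨y, ⟨b, hb⟩, by rw [Units.val_mul, hfval]⟩
  refine ⟨hmem, fun hx => ?_⟩
  -- counting
  have hxrange : x ∈ ψ.range := by
    rw [hrange, hsup_eq, hsqmem]; exact hx
  obtain ⟨p0, hp0⟩ := hxrange
  have hcond : ∀ p : Kˣ × H, (((p.1 : K) : F) * ((p.2 : Fˣ) : F) = (x : F)) ↔ ψ p = x := by
    intro p
    rw [Units.ext_iff, hψ, Units.val_mul, hfval]
  have hfib : Nat.card {p : Kˣ × H // ((p.1 : K) : F) * ((p.2 : Fˣ) : F) = (x : F)} =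
      Nat.card ψ.ker := by
    apply Nat.card_congr
    refine (Equiv.subtypeEquivRight hcond).trans ?_
    refine ⟨fun p => ⟨p.1 * p0⁻¹, ?_⟩, fun p => ⟨p.1 * p0, ?_⟩, ?_, ?_⟩
    · have hp2 : ψ p.1 = x := p.2
      rw [MonoidHom.mem_ker, map_mul, map_inv, hp2, hp0, mul_inv_cancel]
    · have hp2 : ψ (p : Kˣ × H) = 1 := p.2
      rw [map_mul, hp2, one_mul, hp0]
    · intro p; ext1; simp [mul_assoc]
    · intro p; ext1; simp [mul_assoc]
  rw [hfib]
  -- arithmetic conclusion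
  have hdom : Nat.card (Kˣ × H) = (q - 1) * (M / N) := by
    rw [Nat.card_prod, hcardKx, hH]
  have hrangecard : Nat.card ψ.range = M / 2 := by
    rw [hrange]; exact hcM2
  have hkeyeq : (q - 1) * (M / N) = (M / 2) * Nat.card ψ.ker := by
    rw [← hdom, hfψ, hrangecard]
  obtain ⟨w, hw⟩ := hN2q
  have hwdiv : 2 * (q - 1) / N = w := by rw [hw, Nat.mul_div_cancel_left _ hN]
  rw [hwdiv]
  -- show (q-1)*(M/N) = (M/2)*w, then cancel
  obtain ⟨m2, hm2⟩ := hM2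
  obtain ⟨mN, hmN⟩ := hNdvd
  have hM2v : M / 2 = m2 := by rw [hm2, Nat.mul_div_cancel_left _ (by norm_num)]
  have hMNv : M / N = mN := by rw [hmN, Nat.mul_div_cancel_left _ hN]
  have hgoal : (q - 1) * (M / N) = (M / 2) * w := by
    rw [hM2v, hMNv]
    have h2N0 : 0 < 2 * N := by omega
    apply Nat.eq_of_mul_eq_mul_left h2N0
    calc 2 * N * ((q - 1) * mN) = 2 * (q - 1) * (N * mN) := by ring
    _ = N * w * (2 * m2) := by rw [← hw, ← hmN, ← hm2]
    _ = 2 * N * (m2 * w) := by ring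
  rw [hgoal] at hkeyeq
  have hm2pos : 0 < M / 2 := by omega
  exact Nat.eq_of_mul_eq_mul_left hm2pos hkeyeq.symm
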